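/- Let λ > 1, q ∈ ℕ with q ≥ 1, and s > 0. For i ∈ ℕ₀ put E_i = {(x,y) ∈ ℝ² : λ^{2iq}x² + λ^{−2iq}y² ≤ s²}, U^{(κ)} = ∩_{i=0}^{κ} E_i and Q^κ = U^{(κ)} \ E_{κ+1}, and set f(t) = arcsin(λ^t/√(1+λ^{2t})) − arcsin(1/√(1+λ^{2t})). Then Leb₂(Q^0) = 2s²·f(q), and for every κ ≥ 1, Leb₂(Q^κ) = 2s²·(f((κ+1)q) − f(κq)). -/

import Mathlib

open MeasureTheory Filter Topology Set

noncomputable section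

/-- The ellipse region `E_i = {(x,y) : λ^{2iq}x² + λ^{-2iq}y² ≤ s²}`. -/
def ellipseSet (lam s : ℝ) (q i : ℕ) : Set (ℝ × ℝ) :=
  {p | lam ^ (2 * i * q) * p.1 ^ 2 + (lam ^ (2 * i * q))⁻¹ * p.2 ^ 2 ≤ s ^ 2}

/-- `U^{(κ)} = ⋂_{i=0}^{κ} E_i`. -/
def Uset (lam s : ℝ) (q κ : ℕ) : Set (ℝ × ℝ) :=
  ⋂ i ≤ κ, ellipseSet lam s q i

/-- `Q^κ = U^{(κ)} \ E_{κ+1}`. -/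
def Qset (lam s : ℝ) (q κ : ℕ) : Set (ℝ × ℝ) :=
  Uset lam s q κ \ ellipseSet lam s q (κ + 1)

/-- `f(t) = arcsin(λ^t/√(1+λ^{2t})) − arcsin(1/√(1+λ^{2t}))`. -/
def fArc (lam : ℝ) (t : ℕ) : ℝ :=
  Real.arcsin (lam ^ t / Real.sqrt (1 + lam ^ (2 * t))) -
    Real.arcsin (1 / Real.sqrt (1 + lam ^ (2 * t)))

lemma integral_two_sqrt (s r a b : ℝ) (hs : 0 < s) (hr : 0 < r) (hab : a ≤ b)
    (ha : -s ≤ r * a) (hb : r * b ≤ s) :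
    ∫ x in a..b, 2 * r * Real.sqrt (s ^ 2 - r ^ 2 * x ^ 2) =
      (r * b * Real.sqrt (s ^ 2 - r ^ 2 * b ^ 2) + s ^ 2 * Real.arcsin (r * b / s)) -
      (r * a * Real.sqrt (s ^ 2 - r ^ 2 * a ^ 2) + s ^ 2 * Real.arcsin (r * a / s)) := by
  have hcont : Continuous fun x : ℝ =>
      r * x * Real.sqrt (s ^ 2 - r ^ 2 * x ^ 2) + s ^ 2 * Real.arcsin (r * x / s) := by
    apply Continuous.add
    · exact (continuous_const.mul continuous_id).mul
        (Real.continuous_sqrt.comp (by continuity))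
    · exact continuous_const.mul (Real.continuous_arcsin.comp (by continuity))
  apply intervalIntegral.integral_eq_sub_of_hasDeriv_right_of_le hab hcont.continuousOn
  · intro x hx
    have hax : r * a < r * x := by nlinarith [hx.1]
    have hxb : r * x < r * b := by nlinarith [hx.2]
    have h1 : -s < r * x := lt_of_le_of_lt ha hax
    have h2 : r * x < s := lt_of_lt_of_le hxb hb
    have hlt : r ^ 2 * x ^ 2 < s ^ 2 := by nlinarith
    have hw0 : 0 < Real.sqrt (s ^ 2 - r ^ 2 * x ^ 2) := Real.sqrt_pos.mpr (by linarith)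
    have hw2 : Real.sqrt (s ^ 2 - r ^ 2 * x ^ 2) ^ 2 = s ^ 2 - r ^ 2 * x ^ 2 :=
      Real.sq_sqrt (by linarith)
    have hinner : HasDerivAt (fun y : ℝ => r * y / s) (r / s) x := by
      simpa using (((hasDerivAt_id x).const_mul r).div_const s)
    have hne1 : r * x / s ≠ -1 := by
      intro h
      have : r * x = -s := by field_simp at h; linarith
      linarith
    have hne2 : r * x / s ≠ 1 := by
      intro h
      rw [div_eq_one_iff_eq hs.ne'] at h
      linarith
    have harc : HasDerivAt (fun y : ℝ => Real.arcsin (r * y / s))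
        ((1 / Real.sqrt (1 - (r * x / s) ^ 2)) * (r / s)) x :=
      HasDerivAt.comp (h₂ := Real.arcsin) x (Real.hasDerivAt_arcsin hne1 hne2) hinner
    have hg : HasDerivAt (fun y : ℝ => s ^ 2 - r ^ 2 * y ^ 2) (-(r ^ 2 * (2 * x))) x := by
      simpa using (HasDerivAt.const_sub (s ^ 2) ((hasDerivAt_pow 2 x).const_mul (r ^ 2)))
    have hsq : HasDerivAt (fun y : ℝ => Real.sqrt (s ^ 2 - r ^ 2 * y ^ 2))
        (1 / (2 * Real.sqrt (s ^ 2 - r ^ 2 * x ^ 2)) * (-(r ^ 2 * (2 * x)))) x :=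
      (Real.hasDerivAt_sqrt (by nlinarith)).comp x hg
    have hmul : HasDerivAt (fun y : ℝ => r * y * Real.sqrt (s ^ 2 - r ^ 2 * y ^ 2))
        ((r * 1) * Real.sqrt (s ^ 2 - r ^ 2 * x ^ 2) + (r * x) * (1 / (2 * Real.sqrt (s ^ 2 - r ^ 2 * x ^ 2)) * (-(r ^ 2 * (2 * x))))) x :=
      HasDerivAt.mul (by simpa using (hasDerivAt_id x).const_mul r) hsq
    have hsum := hmul.add (harc.const_mul (s ^ 2))
    have hsroot : Real.sqrt (1 - (r * x / s) ^ 2) = Real.sqrt (s ^ 2 - r ^ 2 * x ^ 2) / s := by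
      rw [show 1 - (r * x / s) ^ 2 = (s ^ 2 - r ^ 2 * x ^ 2) / s ^ 2 by
        field_simp]
      rw [Real.sqrt_div (by linarith), Real.sqrt_sq hs.le]
    have heq : (r * 1) * Real.sqrt (s ^ 2 - r ^ 2 * x ^ 2) + (r * x) * (1 / (2 * Real.sqrt (s ^ 2 - r ^ 2 * x ^ 2)) * (-(r ^ 2 * (2 * x))))
        + s ^ 2 * ((1 / Real.sqrt (1 - (r * x / s) ^ 2)) * (r / s)) = 2 * r * Real.sqrt (s ^ 2 - r ^ 2 * x ^ 2) := by
      have key : ∀ W : ℝ, 0 < W → W ^ 2 = s ^ 2 - r ^ 2 * x ^ 2 →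
          (r * 1) * W + (r * x) * (1 / (2 * W) * (-(r ^ 2 * (2 * x))))
            + s ^ 2 * ((1 / (W / s)) * (r / s)) = 2 * r * W := by
        intro W h0 h2
        field_simp
        linear_combination (-1) * h2
      rw [hsroot]
      exact key _ hw0 hw2
    rw [heq] at hsum
    exact hsum.hasDerivWithinAt
  · apply Continuous.intervalIntegrable
    exact continuous_const.mul (Real.continuous_sqrt.comp (by continuity))

lemma vol_disk_inter_ellipse (s t : ℝ) (hs : 0 < s) (ht : 1 ≤ t) :
    volume {p : ℝ × ℝ | p.1 ^ 2 + p.2 ^ 2 ≤ s ^ 2 ∧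
        t ^ 2 * p.1 ^ 2 + (t ^ 2)⁻¹ * p.2 ^ 2 ≤ s ^ 2} =
      ENNReal.ofReal (s ^ 2 * Real.pi - 2 * s ^ 2 *
        (Real.arcsin (t / Real.sqrt (1 + t ^ 2)) - Real.arcsin (1 / Real.sqrt (1 + t ^ 2)))) := by
  have ht0 : 0 < t := lt_of_lt_of_le one_pos ht
  have ht2 : (0:ℝ) < t ^ 2 := by positivity
  set S : Set (ℝ × ℝ) := {p | p.1 ^ 2 + p.2 ^ 2 ≤ s ^ 2 ∧
      t ^ 2 * p.1 ^ 2 + (t ^ 2)⁻¹ * p.2 ^ 2 ≤ s ^ 2} with hS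
  set m : ℝ → ℝ := fun x => min (s ^ 2 - x ^ 2) (t ^ 2 * (s ^ 2 - t ^ 2 * x ^ 2)) with hm
  set g : ℝ → ℝ := fun x => 2 * Real.sqrt (m x) with hg
  have hSm : MeasurableSet S := by
    rw [hS, setOf_and]
    exact (measurableSet_le (by fun_prop) (by fun_prop)).inter
      (measurableSet_le (by fun_prop) (by fun_prop))
  have hiff : ∀ x y : ℝ, ((x, y) ∈ S ↔ y ^ 2 ≤ m x) := by
    intro x y
    simp only [hS, hm, mem_setOf_eq, le_min_iff]
    constructor
    · rintro ⟨h1, h2⟩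
      refine ⟨by linarith, ?_⟩
      have h3 := mul_le_mul_of_nonneg_left h2 ht2.le
      have h4 : t ^ 2 * ((t ^ 2)⁻¹ * y ^ 2) = y ^ 2 := by
        field_simp
      nlinarith
    · rintro ⟨h1, h2⟩
      refine ⟨by linarith, ?_⟩
      have h3 := mul_le_mul_of_nonneg_left h2 (inv_nonneg.mpr ht2.le)
      have h4 : (t ^ 2)⁻¹ * (t ^ 2 * (s ^ 2 - t ^ 2 * x ^ 2)) = s ^ 2 - t ^ 2 * x ^ 2 := by
        field_simp
      nlinarith [inv_pos.mpr ht2]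
  have hslice : ∀ x : ℝ, volume (Prod.mk x ⁻¹' S) = ENNReal.ofReal (g x) := by
    intro x
    have hpre : Prod.mk x ⁻¹' S = {y : ℝ | y ^ 2 ≤ m x} := by
      ext y; exact hiff x y
    rw [hpre]
    rcases le_or_gt 0 (m x) with h | h
    · have : {y : ℝ | y ^ 2 ≤ m x} = Icc (-Real.sqrt (m x)) (Real.sqrt (m x)) := by
        ext y
        simp only [mem_setOf_eq, mem_Icc]
        constructor
        · intro hy
          have := Real.sqrt_le_sqrt hy
          rw [Real.sqrt_sq_eq_abs] at this
          exact abs_le.mp this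
        · intro hy
          have habs : |y| ≤ Real.sqrt (m x) := abs_le.mpr hy
          calc y ^ 2 = |y| ^ 2 := (sq_abs y).symm
            _ ≤ Real.sqrt (m x) ^ 2 := by
                exact pow_le_pow_left₀ (abs_nonneg y) habs 2
            _ = m x := Real.sq_sqrt h
      rw [this, Real.volume_Icc]
      congr 1
      simp [hg]; ring
    · have : {y : ℝ | y ^ 2 ≤ m x} = (∅ : Set ℝ) := by
        ext y
        simp only [mem_setOf_eq, mem_empty_iff_false, iff_false, not_le]
        nlinarith [sq_nonneg y]
      rw [this]
      simp [hg, Real.sqrt_eq_zero'.mpr h.le]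
  -- continuity of g
  have hgc : Continuous g := by
    apply continuous_const.mul
    apply Real.continuous_sqrt.comp
    exact Continuous.min (by fun_prop) (by fun_prop)
  have h1t2 : (1:ℝ) ≤ t ^ 2 := by nlinarith [ht, ht0]
  obtain ⟨d, hd⟩ : ∃ d : ℝ, d = s / t := ⟨_, rfl⟩
  have hd0 : 0 < d := by rw [hd]; positivity
  have htd : t * d = s := by rw [hd]; field_simp
  have hzero : ∀ x : ℝ, x ∉ Icc (-d) d → g x = 0 := by
    intro x hx
    simp only [mem_Icc, not_and_or, not_le] at hx
    have hx2 : d ^ 2 < x ^ 2 := by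
      rcases hx with h | h
      · nlinarith
      · nlinarith
    have hs2 : s ^ 2 = t ^ 2 * d ^ 2 := by linear_combination (-(t * d) - s) * htd
    have hneg : m x ≤ 0 := by
      refine le_trans (min_le_right _ _) ?_
      nlinarith [hs2, mul_lt_mul_of_pos_left hx2 (mul_pos ht2 ht2)]
    simp [hg, Real.sqrt_eq_zero'.mpr hneg]
  have hcs : HasCompactSupport g := HasCompactSupport.intro isCompact_Icc hzero
  have hint : Integrable g volume := hgc.integrable_of_hasCompactSupport hcs
  -- Fubini
  rw [Measure.volume_eq_prod, Measure.prod_apply hSm]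
  rw [lintegral_congr hslice]
  rw [← ofReal_integral_eq_lintegral_ofReal hint
    (Filter.Eventually.of_forall fun x => by positivity)]
  congr 1
  -- now compute the real integral
  rw [← setIntegral_eq_integral_of_forall_compl_eq_zero hzero]
  rw [integral_Icc_eq_integral_Ioc, ← intervalIntegral.integral_of_le (by linarith)]
  -- interval splitting
  obtain ⟨c, hc⟩ : ∃ c : ℝ, c = s / Real.sqrt (1 + t ^ 2) := ⟨_, rfl⟩
  have hq0 : 0 < Real.sqrt (1 + t ^ 2) := Real.sqrt_pos.mpr (by positivity)
  have hqsq : Real.sqrt (1 + t ^ 2) ^ 2 = 1 + t ^ 2 := Real.sq_sqrt (by positivity)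
  have hc0 : 0 < c := by rw [hc]; positivity
  have hc2 : (1 + t ^ 2) * c ^ 2 = s ^ 2 := by
    rw [hc, div_pow, hqsq]; field_simp
  have htled : t ≤ Real.sqrt (1 + t ^ 2) := by
    have h := Real.sqrt_le_sqrt (show t ^ 2 ≤ 1 + t ^ 2 by linarith)
    rwa [Real.sqrt_sq ht0.le] at h
  have hcd : c ≤ d := by
    rw [hc, hd, div_le_div_iff₀ hq0 ht0]
    nlinarith [htled, hs]
  have hcs' : c ≤ s := by
    rw [hc]; exact div_le_self hs.le (by linarith [htled, ht])
  have hii : ∀ a b : ℝ, IntervalIntegrable g volume a b := fun a b =>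
    hgc.intervalIntegrable a b
  have hsplit : ∫ x in (-d)..d, g x =
      ((∫ x in (-d)..(-c), g x) + ∫ x in (-c)..c, g x) + ∫ x in c..d, g x := by
    rw [intervalIntegral.integral_add_adjacent_intervals (hii _ _) (hii _ _),
      intervalIntegral.integral_add_adjacent_intervals (hii _ _) (hii _ _)]
  rw [hsplit]
  -- the three pieces
  have hmid : ∫ x in (-c)..c, g x = 2 * (c * (t * c)) + 2 * (s ^ 2 * Real.arcsin (c / s)) := by
    have hEq : EqOn g (fun x => 2 * 1 * Real.sqrt (s ^ 2 - 1 ^ 2 * x ^ 2)) (uIcc (-c) c) := by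
      intro x hx
      rw [uIcc_of_le (by linarith)] at hx
      have hx2 : x ^ 2 ≤ c ^ 2 := sq_le_sq' hx.1 hx.2
      have : m x = s ^ 2 - x ^ 2 := by
        apply min_eq_left
        have key : 0 ≤ (t ^ 2 - 1) * (s ^ 2 - (1 + t ^ 2) * x ^ 2) := by
          apply mul_nonneg
          · linarith [h1t2]
          · linarith [mul_le_mul_of_nonneg_left hx2
              (by positivity : (0:ℝ) ≤ 1 + t ^ 2), hc2]
        linarith [key]
      simp [hg, this]
    rw [intervalIntegral.integral_congr hEq]
    rw [integral_two_sqrt s 1 (-c) c hs one_pos (by linarith) (by linarith) (by linarith)]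
    have h1 : Real.sqrt (s ^ 2 - 1 ^ 2 * c ^ 2) = t * c := by
      rw [show s ^ 2 - 1 ^ 2 * c ^ 2 = (t * c) ^ 2 by linear_combination -hc2]
      exact Real.sqrt_sq (by positivity)
    have h2 : Real.sqrt (s ^ 2 - 1 ^ 2 * (-c) ^ 2) = t * c := by rw [neg_pow]; simpa using h1
    rw [h1, h2]
    rw [show 1 * -c / s = -(1 * c / s) by ring, Real.arcsin_neg]
    ring_nf
  have hright : ∫ x in c..d, g x =
      s ^ 2 * (Real.pi / 2) - (t * c * c + s ^ 2 * Real.arcsin (t * c / s)) := by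
    have hEq : EqOn g (fun x => 2 * t * Real.sqrt (s ^ 2 - t ^ 2 * x ^ 2)) (uIcc c d) := by
      intro x hx
      rw [uIcc_of_le hcd] at hx
      have hx2 : c ^ 2 ≤ x ^ 2 := by
        rw [sq, sq]; exact mul_self_le_mul_self hc0.le hx.1
      have hmin : m x = t ^ 2 * (s ^ 2 - t ^ 2 * x ^ 2) := by
        apply min_eq_right
        have key : 0 ≤ (t ^ 2 - 1) * ((1 + t ^ 2) * x ^ 2 - s ^ 2) := by
          apply mul_nonneg
          · linarith [h1t2]
          · linarith [mul_le_mul_of_nonneg_left hx2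
              (by positivity : (0:ℝ) ≤ 1 + t ^ 2), hc2]
        linarith [key]
      simp only [hg, hmin]
      rw [Real.sqrt_mul (sq_nonneg t), Real.sqrt_sq ht0.le]
      ring
    rw [intervalIntegral.integral_congr hEq]
    rw [integral_two_sqrt s t c d hs ht0 hcd
      (le_trans (by linarith : -s ≤ 0) (by positivity : (0:ℝ) ≤ t * c)) (le_of_eq htd)]
    have h1 : Real.sqrt (s ^ 2 - t ^ 2 * d ^ 2) = 0 := by
      rw [show s ^ 2 - t ^ 2 * d ^ 2 = 0 by linear_combination (-(t * d) - s) * htd]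
      exact Real.sqrt_zero
    have h2 : Real.sqrt (s ^ 2 - t ^ 2 * c ^ 2) = c := by
      rw [show s ^ 2 - t ^ 2 * c ^ 2 = c ^ 2 by linear_combination -hc2]
      exact Real.sqrt_sq hc0.le
    have h3 : t * d / s = 1 := by
      rw [htd]; field_simp
    rw [h1, h2, h3, Real.arcsin_one]
    ring
  have hleft : ∫ x in (-d)..(-c), g x =
      s ^ 2 * (Real.pi / 2) - (t * c * c + s ^ 2 * Real.arcsin (t * c / s)) := by
    have hEq : EqOn g (fun x => 2 * t * Real.sqrt (s ^ 2 - t ^ 2 * x ^ 2)) (uIcc (-d) (-c)) := by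
      intro x hx
      rw [uIcc_of_le (by linarith)] at hx
      have hx2 : c ^ 2 ≤ x ^ 2 := by
        have h' : c ^ 2 ≤ (-x) ^ 2 := by
          rw [sq, sq]; exact mul_self_le_mul_self hc0.le (by linarith [hx.2])
        simpa using h'
      have hmin : m x = t ^ 2 * (s ^ 2 - t ^ 2 * x ^ 2) := by
        apply min_eq_right
        have key : 0 ≤ (t ^ 2 - 1) * ((1 + t ^ 2) * x ^ 2 - s ^ 2) := by
          apply mul_nonneg
          · linarith [h1t2]
          · linarith [mul_le_mul_of_nonneg_left hx2
              (by positivity : (0:ℝ) ≤ 1 + t ^ 2), hc2]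
        linarith [key]
      simp only [hg, hmin]
      rw [Real.sqrt_mul (sq_nonneg t), Real.sqrt_sq ht0.le]
      ring
    rw [intervalIntegral.integral_congr hEq]
    rw [integral_two_sqrt s t (-d) (-c) hs ht0 (by linarith)
      (by rw [mul_neg, htd]) (by nlinarith [mul_pos ht0 hc0])]
    have h1 : Real.sqrt (s ^ 2 - t ^ 2 * (-d) ^ 2) = 0 := by
      rw [show s ^ 2 - t ^ 2 * (-d) ^ 2 = 0 by linear_combination (-(t * d) - s) * htd]
      exact Real.sqrt_zero
    have h2 : Real.sqrt (s ^ 2 - t ^ 2 * (-c) ^ 2) = c := by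
      rw [show s ^ 2 - t ^ 2 * (-c) ^ 2 = c ^ 2 by linear_combination -hc2]
      exact Real.sqrt_sq hc0.le
    have h3 : t * -d / s = -1 := by
      rw [mul_neg, htd]; field_simp
    have h4 : t * -c / s = -(t * c / s) := by ring
    rw [h1, h2, h3, h4, Real.arcsin_neg, Real.arcsin_neg_one]
    ring
  rw [hmid, hright, hleft]
  have ha1 : c / s = 1 / Real.sqrt (1 + t ^ 2) := by
    rw [hc]; field_simp
  have ha2 : t * c / s = t / Real.sqrt (1 + t ^ 2) := by
    rw [hc]; field_simp
  rw [ha1, ha2]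
  ring

lemma interp (a A x y s : ℝ) (ha : 1 ≤ a) (haA : a ≤ A)
    (h0 : x ^ 2 + y ^ 2 ≤ s ^ 2) (hA : A * x ^ 2 + A⁻¹ * y ^ 2 ≤ s ^ 2) :
    a * x ^ 2 + a⁻¹ * y ^ 2 ≤ s ^ 2 := by
  have ha0 : (0:ℝ) < a := lt_of_lt_of_le one_pos ha
  have hA0 : (0:ℝ) < A := lt_of_lt_of_le ha0 haA
  rcases le_or_gt (a ^ 2 * x ^ 2) (y ^ 2) with h | h
  · have hle : a * x ^ 2 + a⁻¹ * y ^ 2 ≤ x ^ 2 + y ^ 2 := by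
      rw [← sub_nonneg]
      have expand : x ^ 2 + y ^ 2 - (a * x ^ 2 + a⁻¹ * y ^ 2)
          = (a - 1) * (y ^ 2 - a * x ^ 2) / a := by
        field_simp; ring
      rw [expand]
      apply div_nonneg _ ha0.le
      apply mul_nonneg (by linarith)
      nlinarith [mul_nonneg (mul_nonneg ha0.le (sub_nonneg.mpr ha)) (sq_nonneg x)]
    linarith
  · have hle : a * x ^ 2 + a⁻¹ * y ^ 2 ≤ A * x ^ 2 + A⁻¹ * y ^ 2 := by
      rw [← sub_nonneg]
      have expand : A * x ^ 2 + A⁻¹ * y ^ 2 - (a * x ^ 2 + a⁻¹ * y ^ 2)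
          = (A - a) * (a * A * x ^ 2 - y ^ 2) / (a * A) := by
        field_simp; ring
      rw [expand]
      apply div_nonneg _ (by positivity)
      apply mul_nonneg (by linarith)
      nlinarith [mul_le_mul_of_nonneg_right (mul_le_mul_of_nonneg_left haA ha0.le) (sq_nonneg x)]
    linarith

/-- the Lebesgue measures of the sets `Q^κ`:
`Leb₂(Q⁰) = 2s²f(q)` and `Leb₂(Q^κ) = 2s²(f((κ+1)q) − f(κq))` for `κ ≥ 1`. -/
theorem measure_Qset
    (lam : ℝ) (hlam : 1 < lam) (q : ℕ) (hq : 1 ≤ q) (s : ℝ) (hs : 0 < s) :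
    volume (Qset lam s q 0) = ENNReal.ofReal (2 * s ^ 2 * fArc lam q) ∧
      ∀ κ : ℕ, 1 ≤ κ →
        volume (Qset lam s q κ) =
          ENNReal.ofReal (2 * s ^ 2 * (fArc lam ((κ + 1) * q) - fArc lam (κ * q))) := by
  have hlam0 : (0:ℝ) < lam := lt_trans one_pos hlam
  have ht1 : ∀ j : ℕ, 1 ≤ lam ^ (j * q) := fun j => one_le_pow₀ hlam.le
  have hE : ∀ i : ℕ, ellipseSet lam s q i = {p : ℝ × ℝ |
      (lam ^ (i * q)) ^ 2 * p.1 ^ 2 + ((lam ^ (i * q)) ^ 2)⁻¹ * p.2 ^ 2 ≤ s ^ 2} := by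
    intro i
    unfold ellipseSet
    rw [show 2 * i * q = (i * q) * 2 by ring, pow_mul]
  have hE0 : ellipseSet lam s q 0 = {p : ℝ × ℝ | p.1 ^ 2 + p.2 ^ 2 ≤ s ^ 2} := by
    unfold ellipseSet
    norm_num
  have hsub : ∀ i κ : ℕ, i ≤ κ →
      ellipseSet lam s q 0 ∩ ellipseSet lam s q κ ⊆ ellipseSet lam s q i := by
    intro i κ hik p hp
    obtain ⟨hp0, hpκ⟩ := hp
    rw [hE0] at hp0
    rw [hE] at hpκ ⊢
    refine interp _ ((lam ^ (κ * q)) ^ 2) _ _ _ ?_ ?_ hp0 hpκ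
    · exact one_le_pow₀ (ht1 i)
    · exact pow_le_pow_left₀ (by positivity) (pow_le_pow_right₀ hlam.le (Nat.mul_le_mul_right q hik)) 2
  have hU : ∀ κ : ℕ, Uset lam s q κ = ellipseSet lam s q 0 ∩ ellipseSet lam s q κ := by
    intro κ
    apply Subset.antisymm
    · intro p hp
      simp only [Uset, mem_iInter] at hp
      exact ⟨hp 0 (Nat.zero_le κ), hp κ le_rfl⟩
    · intro p hp
      simp only [Uset, mem_iInter]
      intro i hi
      exact hsub i κ hi hp
  have hvol : ∀ j : ℕ, volume (ellipseSet lam s q 0 ∩ ellipseSet lam s q j)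
      = ENNReal.ofReal (s ^ 2 * Real.pi - 2 * s ^ 2 * fArc lam (j * q)) := by
    intro j
    have hset : ellipseSet lam s q 0 ∩ ellipseSet lam s q j =
        {p : ℝ × ℝ | p.1 ^ 2 + p.2 ^ 2 ≤ s ^ 2 ∧
          (lam ^ (j * q)) ^ 2 * p.1 ^ 2 + ((lam ^ (j * q)) ^ 2)⁻¹ * p.2 ^ 2 ≤ s ^ 2} := by
      rw [hE0, hE j]
      rfl
    rw [hset, vol_disk_inter_ellipse s (lam ^ (j * q)) hs (ht1 j)]
    have harg : fArc lam (j * q) =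
        Real.arcsin (lam ^ (j * q) / Real.sqrt (1 + (lam ^ (j * q)) ^ 2)) -
          Real.arcsin (1 / Real.sqrt (1 + (lam ^ (j * q)) ^ 2)) := by
      unfold fArc
      rw [show 2 * (j * q) = (j * q) * 2 by ring, pow_mul lam (j * q) 2]
    rw [harg]
  have hfle : ∀ n : ℕ, fArc lam n ≤ Real.pi / 2 := by
    intro n
    unfold fArc
    have h1 := Real.arcsin_le_pi_div_two (lam ^ n / Real.sqrt (1 + lam ^ (2 * n)))
    have h2 : (0:ℝ) ≤ Real.arcsin (1 / Real.sqrt (1 + lam ^ (2 * n))) := by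
      rw [Real.arcsin_nonneg]
      positivity
    linarith
  have hEm : ∀ i : ℕ, MeasurableSet (ellipseSet lam s q i) := by
    intro i
    unfold ellipseSet
    exact measurableSet_le (by fun_prop) (by fun_prop)
  have hQ : ∀ κ : ℕ, volume (Qset lam s q κ) =
      ENNReal.ofReal (2 * s ^ 2 * (fArc lam ((κ + 1) * q) - fArc lam (κ * q))) := by
    intro κ
    have hQeq : Qset lam s q κ = (ellipseSet lam s q 0 ∩ ellipseSet lam s q κ) \
        (ellipseSet lam s q 0 ∩ ellipseSet lam s q (κ + 1)) := by
      rw [Qset, hU κ]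
      ext p
      simp only [mem_diff, mem_inter_iff]
      constructor
      · rintro ⟨⟨h0, hκ⟩, hn⟩
        exact ⟨⟨h0, hκ⟩, fun hc => hn hc.2⟩
      · rintro ⟨⟨h0, hκ⟩, hn⟩
        exact ⟨⟨h0, hκ⟩, fun hc => hn ⟨h0, hc⟩⟩
    have hss : ellipseSet lam s q 0 ∩ ellipseSet lam s q (κ + 1) ⊆
        ellipseSet lam s q 0 ∩ ellipseSet lam s q κ := by
      intro p hp
      exact ⟨hp.1, hsub κ (κ + 1) (Nat.le_succ κ) hp⟩
    have hfin : volume (ellipseSet lam s q 0 ∩ ellipseSet lam s q (κ + 1)) ≠ ⊤ := by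
      rw [hvol (κ + 1)]
      exact ENNReal.ofReal_ne_top
    rw [hQeq, measure_diff hss (((hEm 0).inter (hEm (κ + 1))).nullMeasurableSet) hfin]
    rw [hvol κ, hvol (κ + 1)]
    rw [← ENNReal.ofReal_sub _ (by nlinarith [hfle ((κ+1)*q), sq_nonneg s, Real.pi_pos])]
    congr 1
    ring
  constructor
  · have h0 : fArc lam 0 = 0 := by
      unfold fArc
      norm_num
    have := hQ 0
    rw [show (0 + 1) * q = q by ring, show 0 * q = 0 by ring, h0] at this
    simpa using this
  · intro κ _
    exact hQ κ
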